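/- Let t₀ > 0, α > −1, and β > 0 satisfy the Pohozaev relation 2α I = πβ(β−4) where I = ∫_{ℝ²} |x|² (t₀² + |x|²)^{α−1} e^{φ} and 0 < I < ∫_{ℝ²} (t₀² + |x|²)^{α} e^{φ} = 2πβ. If α > 0 then 4 < β < 4(1+α), equivalently 8π < ∫ (t₀²+|x|²)^α e^φ < 8π(1+α); if −1 < α < 0 then 4(1+α) < β < 4. -/
import Mathlib

open Real MeasureTheory

theorem pohozaev_mass_t0_positive
    (t₀ α β I : ℝ) (ht₀ : 0 < t₀) (hα : -1 < α) (hβ : 0 < β)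
    (φ : EuclideanSpace ℝ (Fin 2) → ℝ)
    (hmass : (∫ x, (t₀ ^ 2 + ‖x‖ ^ 2) ^ α * Real.exp (φ x)) = 2 * π * β)
    (hI : I = ∫ x, ‖x‖ ^ (2 : ℕ) * (t₀ ^ 2 + ‖x‖ ^ 2) ^ (α - 1) * Real.exp (φ x))
    (hIpos : 0 < I) (hIlt : I < 2 * π * β)
    (hPoh : 2 * α * I = π * β * (β - 4)) :
    (0 < α → (4 < β ∧ β < 4 * (1 + α)) ∧
      8 * π < (∫ x, (t₀ ^ 2 + ‖x‖ ^ 2) ^ α * Real.exp (φ x)) ∧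
      (∫ x, (t₀ ^ 2 + ‖x‖ ^ 2) ^ α * Real.exp (φ x)) < 8 * π * (1 + α)) ∧
    (α < 0 → 4 * (1 + α) < β ∧ β < 4) := by
  have hpi := Real.pi_pos
  rw [hmass]
  constructor
  · intro hαpos
    have h1 : 4 < β := by nlinarith
    have h2 : β < 4 * (1 + α) := by nlinarith
    exact ⟨⟨h1, h2⟩, by nlinarith, by nlinarith⟩
  · intro hαneg
    constructor
    · nlinarith
    · nlinarith
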